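/- Let F: ℝ^{nd} → ℝ be convex and differentiable, let L_W be a symmetric positive semidefinite matrix whose kernel contains the consensus space (vectors of the form 𝟙⊗θ), and let x*_η satisfy η∇F(x*_η) + L_W x*_η = 0 for η > 0. Let x̄*_η be the projection of x*_η onto the consensus space, and let x* minimize F over the consensus space. Then D_F(x*, x*_η) ≤ D_F(x̄*_η, x*_η), where D_F(x,y) = F(x) - F(y) - ∇F(y)ᵀ(x-y). -/

import Mathlib

open scoped RealInnerProductSpace

/-- Bregman comparison at the D-GD fixed point: `F` convex differentiable on
`ℝ^{nd}`, `L_W` a symmetric PSD operator whose kernel contains the consensus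
space `S`, and `x*_η` a fixed point `η∇F(x*_η) + L_W x*_η = 0` with `η > 0`.
If `x̄*_η` is the orthogonal projection of `x*_η` onto `S` and `x*` minimizes `F`
over `S`, then `D_F(x*, x*_η) ≤ D_F(x̄*_η, x*_η)`. -/
theorem bregman_fixed_point_bound (N : ℕ)
    (F : EuclideanSpace ℝ (Fin N) → ℝ)
    (hFconv : ConvexOn ℝ Set.univ F) (hFdiff : Differentiable ℝ F)
    (L : EuclideanSpace ℝ (Fin N) →ₗ[ℝ] EuclideanSpace ℝ (Fin N))
    (hLsym : ∀ x y, ⟪L x, y⟫ = ⟪x, L y⟫) (hLpsd : ∀ x, 0 ≤ ⟪L x, x⟫)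
    (S : Submodule ℝ (EuclideanSpace ℝ (Fin N))) (hS : S ≤ LinearMap.ker L)
    (η : ℝ) (hη : 0 < η)
    (xs : EuclideanSpace ℝ (Fin N)) (hfix : η • gradient F xs + L xs = 0)
    (xbar : EuclideanSpace ℝ (Fin N)) (hxbar : xbar = (S.orthogonalProjection xs : EuclideanSpace ℝ (Fin N)))
    (xstar : EuclideanSpace ℝ (Fin N)) (hxstarS : xstar ∈ S)
    (hxstarMin : ∀ y ∈ S, F xstar ≤ F y) :
    F xstar - F xs - ⟪gradient F xs, xstar - xs⟫ ≤
      F xbar - F xs - ⟪gradient F xs, xbar - xs⟫ := by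
  have hgrad : ∀ s ∈ S, ⟪gradient F xs, s⟫ = 0 := by
    intro s hs
    have hLs : L s = 0 := hS hs
    have h1 : η • gradient F xs = -(L xs) := by
      have := hfix
      linear_combination (norm := module) this
    have h2 : ⟪η • gradient F xs, s⟫ = ⟪-(L xs), s⟫ := by rw [h1]
    rw [real_inner_smul_left, inner_neg_left, hLsym, hLs, inner_zero_right] at h2
    have := h2
    nlinarith [hη]
  have hxbarS : xbar ∈ S := by rw [hxbar]; exact (S.orthogonalProjection xs).2
  have hF : F xstar ≤ F xbar := hxstarMin xbar hxbarS
  have hdiff : xstar - xbar ∈ S := sub_mem hxstarS hxbarS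
  have h0 : ⟪gradient F xs, xstar - xbar⟫ = 0 := hgrad _ hdiff
  have heq : ⟪gradient F xs, xstar - xs⟫ = ⟪gradient F xs, xbar - xs⟫ := by
    have : ⟪gradient F xs, xstar - xs⟫ - ⟪gradient F xs, xbar - xs⟫ = 0 := by
      rw [← inner_sub_right]
      have : xstar - xs - (xbar - xs) = xstar - xbar := by abel
      rw [this]; exact h0
    linarith
  linarith
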